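/- With the discrete kernels a^{(β,n)}_{n-k} = (1/(τ_n τ_k)) ∫_{t_{n-1}}^{t_n} ∫_{t_{k-1}}^{min(t,t_k)} ω_β(t-s) ds dt for 0 < β < 1, the kernels are strictly decreasing in the off-diagonal index: a^{(β,n)}_1 > a^{(β,n)}_2 > ⋯ > a^{(β,n)}_{n-1} > 0 for n ≥ 2. -/

import Mathlib

open intervalIntegral Real Set

private lemma inner_eval {β : ℝ} (hβ : 0 < β) (a b x : ℝ) :
    (∫ s in a..b, (x - s) ^ (β - 1) / Real.Gamma β)
      = ((x - a) ^ β - (x - b) ^ β) / (β * Real.Gamma β) := by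
  rw [intervalIntegral.integral_div,
    intervalIntegral.integral_comp_sub_left (fun u => u ^ (β - 1)) x,
    integral_rpow (Or.inl (by linarith)), show β - 1 + 1 = β by ring, div_div]

private lemma cont_aux {p : ℝ} (hp : 0 ≤ p) (a : ℝ) :
    Continuous fun x : ℝ => (x - a) ^ p :=
  (Real.continuous_rpow_const hp).comp (continuous_id.sub continuous_const)

private lemma outer_eval {β : ℝ} (hβ : 0 < β) (a c d : ℝ) :
    (∫ x in c..d, (x - a) ^ β) = ((d - a) ^ (β + 1) - (c - a) ^ (β + 1)) / (β + 1) := by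
  rw [intervalIntegral.integral_comp_sub_right (fun u => u ^ β) a,
    integral_rpow (Or.inl (by linarith))]

private lemma double_eval {β : ℝ} (hβ : 0 < β) {a b c d : ℝ} (hab : a < b) (hbc : b ≤ c)
    (hcd : c < d) :
    (1 / ((d - c) * (b - a))) *
        ∫ x in c..d, ∫ s in a..(min x b), (x - s) ^ (β - 1) / Real.Gamma β
      = (1 / ((d - c) * (β * ((β + 1) * Real.Gamma β)))) *
        ((((c - b) ^ (β + 1) - (d - b) ^ (β + 1)) -
          ((c - a) ^ (β + 1) - (d - a) ^ (β + 1))) / (b - a)) := by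
  have h1 : EqOn (fun x => ∫ s in a..(min x b), (x - s) ^ (β - 1) / Real.Gamma β)
      (fun x => (x - a) ^ β / (β * Real.Gamma β) - (x - b) ^ β / (β * Real.Gamma β))
      (uIcc c d) := by
    intro x hx
    rw [uIcc_of_le hcd.le] at hx
    have hbx : b ≤ x := hbc.trans hx.1
    simp only
    rw [min_eq_right hbx, inner_eval hβ, sub_div]
  rw [intervalIntegral.integral_congr h1,
    intervalIntegral.integral_sub
      (((cont_aux (by linarith) a).div_const _).intervalIntegrable c d)
      (((cont_aux (by linarith) b).div_const _).intervalIntegrable c d),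
    intervalIntegral.integral_div, intervalIntegral.integral_div,
    outer_eval hβ, outer_eval hβ]
  have h1 : b - a ≠ 0 := (sub_pos.mpr hab).ne'
  have h2 : d - c ≠ 0 := (sub_pos.mpr hcd).ne'
  have h3 : β ≠ 0 := hβ.ne'
  have h4 : β + 1 ≠ 0 := by linarith
  have h5 : Real.Gamma β ≠ 0 := (Real.Gamma_pos_of_pos hβ).ne'
  field_simp
  ring

private lemma key_deriv {β c d : ℝ} (hβ : 0 < β) (hcd : c < d) {x : ℝ} (hx : x < c) :
    HasDerivAt (fun a : ℝ => (c - a) ^ (β + 1) - (d - a) ^ (β + 1))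
      ((β + 1) * ((d - x) ^ β - (c - x) ^ β)) x := by
  have hc : c - x ≠ 0 := (sub_pos.mpr hx).ne'
  have hd : d - x ≠ 0 := (sub_pos.mpr (hx.trans hcd)).ne'
  have h1 : HasDerivAt (fun a : ℝ => (c - a) ^ (β + 1))
      (((β + 1) * (c - x) ^ (β + 1 - 1)) * (0 - 1)) x :=
    (Real.hasDerivAt_rpow_const (Or.inl hc)).comp x
      ((hasDerivAt_const x c).sub (hasDerivAt_id x))
  have h2 : HasDerivAt (fun a : ℝ => (d - a) ^ (β + 1))
      (((β + 1) * (d - x) ^ (β + 1 - 1)) * (0 - 1)) x :=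
    (Real.hasDerivAt_rpow_const (Or.inl hd)).comp x
      ((hasDerivAt_const x d).sub (hasDerivAt_id x))
  have := h1.sub h2
  rw [show β + 1 - 1 = β by ring] at this
  exact this.congr_deriv (by ring)

private lemma f_deriv2 {β c d : ℝ} (hβ : 0 < β) (hcd : c < d) {x : ℝ} (hx : x < c) :
    HasDerivAt (fun y : ℝ => (β + 1) * ((d - y) ^ β - (c - y) ^ β))
      ((β * (β + 1)) * ((c - x) ^ (β - 1) - (d - x) ^ (β - 1))) x := by
  have hc : c - x ≠ 0 := (sub_pos.mpr hx).ne'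
  have hd : d - x ≠ 0 := (sub_pos.mpr (hx.trans hcd)).ne'
  have h1 : HasDerivAt (fun a : ℝ => (d - a) ^ β)
      ((β * (d - x) ^ (β - 1)) * (0 - 1)) x :=
    (Real.hasDerivAt_rpow_const (Or.inl hd)).comp x
      ((hasDerivAt_const x d).sub (hasDerivAt_id x))
  have h2 : HasDerivAt (fun a : ℝ => (c - a) ^ β)
      ((β * (c - x) ^ (β - 1)) * (0 - 1)) x :=
    (Real.hasDerivAt_rpow_const (Or.inl hc)).comp x
      ((hasDerivAt_const x c).sub (hasDerivAt_id x))
  have := ((h1.sub h2).const_mul (β + 1))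
  exact this.congr_deriv (by ring)

private lemma f_cont {β c d : ℝ} (hβ : 0 < β) :
    Continuous (fun a : ℝ => (c - a) ^ (β + 1) - (d - a) ^ (β + 1)) := by
  have h : (0 : ℝ) ≤ β + 1 := by linarith
  exact ((Real.continuous_rpow_const h).comp (continuous_const.sub continuous_id)).sub
    ((Real.continuous_rpow_const h).comp (continuous_const.sub continuous_id))

private lemma f_convex {β c d : ℝ} (hβ0 : 0 < β) (hβ1 : β < 1) (hcd : c < d) :
    StrictConvexOn ℝ (Iic c) (fun a : ℝ => (c - a) ^ (β + 1) - (d - a) ^ (β + 1)) := by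
  apply strictConvexOn_of_deriv2_pos (convex_Iic c) (f_cont hβ0).continuousOn
  intro x hx
  rw [interior_Iic] at hx
  have heq : deriv (fun a : ℝ => (c - a) ^ (β + 1) - (d - a) ^ (β + 1)) =ᶠ[nhds x]
      (fun y : ℝ => (β + 1) * ((d - y) ^ β - (c - y) ^ β)) :=
    Filter.eventuallyEq_of_mem (Iio_mem_nhds hx) fun y hy =>
      (key_deriv hβ0 hcd hy).deriv
  have h2 : deriv^[2] (fun a : ℝ => (c - a) ^ (β + 1) - (d - a) ^ (β + 1)) x
      = (β * (β + 1)) * ((c - x) ^ (β - 1) - (d - x) ^ (β - 1)) := by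
    show deriv (deriv (fun a : ℝ => (c - a) ^ (β + 1) - (d - a) ^ (β + 1))) x = _
    rw [heq.deriv_eq, (f_deriv2 hβ0 hcd hx).deriv]
  rw [h2]
  have hlt : (d - x) ^ (β - 1) < (c - x) ^ (β - 1) :=
    Real.rpow_lt_rpow_of_neg (sub_pos.mpr hx) (by linarith) (by linarith)
  have : 0 < β * (β + 1) := by nlinarith
  nlinarith

private lemma f_mono {β c d : ℝ} (hβ0 : 0 < β) (hcd : c < d) :
    StrictMonoOn (fun a : ℝ => (c - a) ^ (β + 1) - (d - a) ^ (β + 1)) (Iic c) := by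
  apply strictMonoOn_of_deriv_pos (convex_Iic c) (f_cont hβ0).continuousOn
  intro x hx
  rw [interior_Iic] at hx
  rw [(key_deriv hβ0 hcd hx).deriv]
  have hlt : (c - x) ^ β < (d - x) ^ β :=
    Real.rpow_lt_rpow (sub_pos.mpr hx).le (by linarith) hβ0
  nlinarith

private lemma key_lt {β : ℝ} (hβ0 : 0 < β) (hβ1 : β < 1) {a b c p q : ℝ}
    (hab : a < b) (hbc : b < c) (hcp : c ≤ p) (hpq : p < q) :
    (1 / ((q - p) * (b - a))) *
        ∫ x in p..q, ∫ s in a..(min x b), (x - s) ^ (β - 1) / Real.Gamma β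
      < (1 / ((q - p) * (c - b))) *
        ∫ x in p..q, ∫ s in b..(min x c), (x - s) ^ (β - 1) / Real.Gamma β := by
  rw [double_eval hβ0 hab (hbc.le.trans hcp) hpq, double_eval hβ0 hbc hcp hpq]
  have hslope := (f_convex hβ0 hβ1 hpq).slope_strict_mono_adjacent
    (show a ∈ Iic p from ((hab.trans hbc).le.trans hcp))
    (show c ∈ Iic p from hcp) hab hbc
  have hC : 0 < 1 / ((q - p) * (β * ((β + 1) * Real.Gamma β))) := by
    have hΓ := Real.Gamma_pos_of_pos hβ0
    have h1 : 0 < q - p := sub_pos.mpr hpq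
    positivity
  exact mul_lt_mul_of_pos_left hslope hC

private lemma key_pos {β : ℝ} (hβ0 : 0 < β) {a b p q : ℝ}
    (hab : a < b) (hbp : b ≤ p) (hpq : p < q) :
    0 < (1 / ((q - p) * (b - a))) *
        ∫ x in p..q, ∫ s in a..(min x b), (x - s) ^ (β - 1) / Real.Gamma β := by
  rw [double_eval hβ0 hab hbp hpq]
  have hm := (f_mono hβ0 hpq) (show a ∈ Iic p from (hab.le.trans hbp))
    (show b ∈ Iic p from hbp) hab
  simp only at hm
  have hC : 0 < 1 / ((q - p) * (β * ((β + 1) * Real.Gamma β))) := by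
    have hΓ := Real.Gamma_pos_of_pos hβ0
    have h1 : 0 < q - p := sub_pos.mpr hpq
    positivity
  exact mul_pos hC (div_pos (sub_pos.mpr hm) (sub_pos.mpr hab))

/-- The discrete kernels
`a^{(β,n)}_{n-k} = (1/(τ_n τ_k)) ∫_{t_{n-1}}^{t_n} ∫_{t_{k-1}}^{min(t,t_k)} ω_β(t-s) ds dt`
are strictly decreasing in the off-diagonal index:
`a^{(β,n)}_1 > a^{(β,n)}_2 > ⋯ > a^{(β,n)}_{n-1} > 0` for `n ≥ 2`. -/
theorem kernels_strictly_decreasing (β : ℝ) (hβ0 : 0 < β) (hβ1 : β < 1)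
    (t : ℕ → ℝ) (ht0 : t 0 = 0) (hmono : ∀ k : ℕ, t k < t (k + 1))
    (n : ℕ) (hn : 2 ≤ n) (A : ℕ → ℝ)
    (hA : ∀ k : ℕ, 1 ≤ k → k ≤ n - 1 →
      A (n - k) = (1 / ((t n - t (n - 1)) * (t k - t (k - 1)))) *
        ∫ x in (t (n - 1))..(t n), ∫ s in (t (k - 1))..(min x (t k)),
          (x - s) ^ (β - 1) / Real.Gamma β) :
    (∀ j : ℕ, 1 ≤ j → j ≤ n - 2 → A (j + 1) < A j) ∧ 0 < A (n - 1) := by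
  have hsm : StrictMono t := strictMono_nat_of_lt_succ hmono
  have hn1 : t (n - 1) < t n := by
    have h := hmono (n - 1)
    rwa [Nat.sub_add_cancel (by omega)] at h
  constructor
  · intro j hj1 hj2
    set k := n - j with hk
    have e1 : n - k = j := by omega
    have e2 : n - (k - 1) = j + 1 := by omega
    have hA1 := hA k (by omega) (by omega)
    have hA2 := hA (k - 1) (by omega) (by omega)
    rw [e1] at hA1
    rw [e2] at hA2
    rw [hA1, hA2, show k - 1 - 1 = k - 2 from by omega]
    exact key_lt hβ0 hβ1 (hsm (show k - 2 < k - 1 by omega))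
      (hsm (show k - 1 < k by omega)) (hsm.monotone (show k ≤ n - 1 by omega)) hn1
  · have hA1 := hA 1 le_rfl (by omega)
    rw [show (1 : ℕ) - 1 = 0 from rfl] at hA1
    rw [hA1]
    exact key_pos hβ0 (hsm (show (0 : ℕ) < 1 by omega))
      (hsm.monotone (show (1 : ℕ) ≤ n - 1 by omega)) hn1
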